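/- Pre-bisimilarity does not imply ATL*-equivalence: there exist finite two-agent iCGS G7, G8, states q ∈ G7 and q' ∈ G8, and a pre-bisimulation ⪅ with q ⪅ q', such that (G7, q) ⊨_subj ¬⟨⟨Ag⟩⟩ F p while (G8, q') ⊨_subj ⟨⟨Ag⟩⟩ F p. -/

import Mathlib

/-- An imperfect-information concurrent game structure (iCGS), given as raw data;
the defining axioms are collected in `iCGS.Valid`. -/
structure iCGS (Ag AP S Act : Type) where
  init : S
  indist : Ag → S → S → Prop
  protocol : Ag → S → Set Act
  trans : S → (Ag → Act) → S → Prop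
  label : S → Set AP

namespace iCGS

variable {Ag AP S S' Act Act' : Type}

/-- The axioms of an iCGS. -/
def Valid (G : iCGS Ag AP S Act) : Prop :=
  (∀ i, Equivalence (G.indist i)) ∧
  (∀ i s, (G.protocol i s).Nonempty) ∧
  (∀ i s s', G.indist i s s' → G.protocol i s = G.protocol i s') ∧
  (∀ s a, (∃ s', G.trans s a s') ↔ ∀ i, a i ∈ G.protocol i s)

/-- Common-knowledge reachability for coalition `A`:
reflexive-transitive closure of the union of the `∼ᵢ`, `i ∈ A`. -/
def ck (G : iCGS Ag AP S Act) (A : Set Ag) : S → S → Prop :=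
  Relation.ReflTransGen (fun s s' => ∃ i ∈ A, G.indist i s s')

/-- Common-knowledge neighbourhood `C_A(q)`. -/
def CKN (G : iCGS Ag AP S Act) (A : Set Ag) (q : S) : Set S := {r | G.ck A q r}

/-- "Everybody knows" neighbourhood `E_A(q)`. -/
def EKN (G : iCGS Ag AP S Act) (A : Set Ag) (q : S) : Set S :=
  {r | ∃ i ∈ A, G.indist i q r}

/-- `σ` is a partial uniform strategy for coalition `A` with domain `Q`. -/
def IsPStrat (G : iCGS Ag AP S Act) (A : Set Ag) (Q : Set S) (σ : Ag → S → Act) : Prop :=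
  (∀ i ∈ A, ∀ s ∈ Q, σ i s ∈ G.protocol i s) ∧
  (∀ i ∈ A, ∀ s ∈ Q, ∀ t ∈ Q, G.indist i s t → σ i s = σ i t)

/-- `σ` is a (total) uniform memoryless strategy for coalition `A`. -/
def IsStrat (G : iCGS Ag AP S Act) (A : Set Ag) (σ : Ag → S → Act) : Prop :=
  G.IsPStrat A Set.univ σ

/-- Successors of `s` under joint actions compatible with `σ` on coalition `A`. -/
def succ (G : iCGS Ag AP S Act) (A : Set Ag) (σ : Ag → S → Act) (s : S) : Set S :=
  {t | ∃ a : Ag → Act, (∀ i ∈ A, a i = σ i s) ∧ G.trans s a t}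

/-- Objective outcome set of strategy `σ` at `q` (runs as infinite state sequences). -/
def OutObj (G : iCGS Ag AP S Act) (A : Set Ag) (σ : Ag → S → Act) (q : S) :
    Set (ℕ → S) :=
  {lam | lam 0 = q ∧ ∀ j, lam (j + 1) ∈ G.succ A σ (lam j)}

/-- Subjective outcome set: union of objective outcomes over states indistinguishable
from `q` for some member of the coalition. -/
def OutSubj (G : iCGS Ag AP S Act) (A : Set Ag) (σ : Ag → S → Act) (q : S) :
    Set (ℕ → S) :=
  {lam | ∃ i ∈ A, ∃ r, G.indist i q r ∧ lam ∈ G.OutObj A σ r}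

/-- Outcome set: subjective (`x = true`) or objective (`x = false`).
(For a nonempty coalition the subjective case coincides with the union of
objective outcomes over indistinguishable states, by reflexivity; for the
empty coalition it degenerates to the objective case.) -/
def Out (G : iCGS Ag AP S Act) (x : Bool) (A : Set Ag) (σ : Ag → S → Act) (q : S) :
    Set (ℕ → S) :=
  if x then G.OutObj A σ q ∪ G.OutSubj A σ q else G.OutObj A σ q

/-- `R` is a simulation for coalition `A` from `G` to `G'` (Def. of simulation):
existence of a strategy simulator over common-knowledge neighbourhoods with
(a) atom agreement, (b) epistemic back-condition, (c) strategy transfer, and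
(2) injectivity modulo common-knowledge neighbourhoods. -/
def IsSimulation (G : iCGS Ag AP S Act) (G' : iCGS Ag AP S' Act') (A : Set Ag)
    (R : S → S' → Prop) : Prop :=
  (∃ ST : Set S → Set S' → (Ag → S → Act) → (Ag → S' → Act'),
    ∀ q q', R q q' →
      (∀ σ, G.IsPStrat A (G.CKN A q) σ →
        G'.IsPStrat A (G'.CKN A q') (ST (G.CKN A q) (G'.CKN A q') σ)) ∧
      (∀ r ∈ G.CKN A q, ∀ r' ∈ G'.CKN A q', R r r' →
        ∀ σ, G.IsPStrat A (G.CKN A q) σ →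
          ∀ s' ∈ G'.succ A (ST (G.CKN A q) (G'.CKN A q') σ) r',
            ∃ s ∈ G.succ A σ r, R s s')) ∧
  (∀ q q', R q q' → G.label q = G'.label q') ∧
  (∀ q q', R q q' → ∀ i ∈ A, ∀ r', G'.indist i q' r' →
    ∃ r, G.indist i q r ∧ R r r') ∧
  (∀ q₁ q₂ q', R q₁ q' → R q₂ q' → G.CKN A q₁ = G.CKN A q₂)

/-- `R` is a bisimulation for `A` iff both `R` and its converse are `A`-simulations. -/
def IsBisimulation (G : iCGS Ag AP S Act) (G' : iCGS Ag AP S' Act') (A : Set Ag)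
    (R : S → S' → Prop) : Prop :=
  G.IsSimulation G' A R ∧ G'.IsSimulation G A (fun q' q => R q q')

end iCGS
mutual
/-- State formulas of ATL*. -/
inductive SF (AP Ag : Type) : Type where
  | atom : AP → SF AP Ag
  | neg : SF AP Ag → SF AP Ag
  | imp : SF AP Ag → SF AP Ag → SF AP Ag
  | coal : Set Ag → PF AP Ag → SF AP Ag
/-- Path formulas of ATL*. -/
inductive PF (AP Ag : Type) : Type where
  | of : SF AP Ag → PF AP Ag
  | neg : PF AP Ag → PF AP Ag
  | imp : PF AP Ag → PF AP Ag → PF AP Ag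
  | next : PF AP Ag → PF AP Ag
  | untl : PF AP Ag → PF AP Ag → PF AP Ag
end

variable {Ag AP S Act : Type}

mutual
/-- Satisfaction of ATL* state formulas; `x = true` is the subjective,
`x = false` the objective imperfect-information memoryless semantics. -/
def SSat (G : iCGS Ag AP S Act) (x : Bool) : S → SF AP Ag → Prop
  | s, .atom p => p ∈ G.label s
  | s, .neg φ => ¬ SSat G x s φ
  | s, .imp φ ψ => SSat G x s φ → SSat G x s ψ
  | s, .coal A ψ =>
      ∃ σ, G.IsStrat A σ ∧ ∀ lam ∈ G.Out x A σ s, PSat G x lam ψ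
/-- Satisfaction of ATL* path formulas on runs. -/
def PSat (G : iCGS Ag AP S Act) (x : Bool) : (ℕ → S) → PF AP Ag → Prop
  | lam, .of φ => SSat G x (lam 0) φ
  | lam, .neg ψ => ¬ PSat G x lam ψ
  | lam, .imp ψ χ => PSat G x lam ψ → PSat G x lam χ
  | lam, .next ψ => PSat G x (fun n => lam (n + 1)) ψ
  | lam, .untl ψ χ => ∃ j, PSat G x (fun n => lam (n + j)) χ ∧
      ∀ k < j, PSat G x (fun n => lam (n + k)) ψ
end

mutual
/-- `φ` is an `A`-formula: `A` is the only coalition occurring in it. -/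
def SOnly (A : Set Ag) : SF AP Ag → Prop
  | .atom _ => True
  | .neg φ => SOnly A φ
  | .imp φ ψ => SOnly A φ ∧ SOnly A ψ
  | .coal B ψ => B = A ∧ POnly A ψ
def POnly (A : Set Ag) : PF AP Ag → Prop
  | .of φ => SOnly A φ
  | .neg ψ => POnly A ψ
  | .imp ψ χ => POnly A ψ ∧ POnly A χ
  | .next ψ => POnly A ψ
  | .untl ψ χ => POnly A ψ ∧ POnly A χ
end

namespace iCGS
variable {Ag AP S S' Act Act' : Type}

/-- Pre-simulation: like a simulation but over "everybody knows" neighbourhoods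
`E_A` instead of common-knowledge neighbourhoods, and without the injectivity
condition (2). -/
def IsPreSimulation (G : iCGS Ag AP S Act) (G' : iCGS Ag AP S' Act') (A : Set Ag)
    (R : S → S' → Prop) : Prop :=
  (∃ ST : Set S → Set S' → (Ag → S → Act) → (Ag → S' → Act'),
    ∀ q q', R q q' →
      (∀ σ, G.IsPStrat A (G.EKN A q) σ →
        G'.IsPStrat A (G'.EKN A q') (ST (G.EKN A q) (G'.EKN A q') σ)) ∧
      (∀ r ∈ G.EKN A q, ∀ r' ∈ G'.EKN A q', R r r' →
        ∀ σ, G.IsPStrat A (G.EKN A q) σ →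
          ∀ s' ∈ G'.succ A (ST (G.EKN A q) (G'.EKN A q') σ) r',
            ∃ s ∈ G.succ A σ r, R s s')) ∧
  (∀ q q', R q q' → G.label q = G'.label q') ∧
  (∀ q q', R q q' → ∀ i ∈ A, ∀ r', G'.indist i q' r' →
    ∃ r, G.indist i q r ∧ R r r')

/-- Pre-bisimulation: `R` and its converse are pre-simulations. -/
def IsPreBisimulation (G : iCGS Ag AP S Act) (G' : iCGS Ag AP S' Act') (A : Set Ag)
    (R : S → S' → Prop) : Prop :=
  G.IsPreSimulation G' A R ∧ G'.IsPreSimulation G A (fun q' q => R q q')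

end iCGS

/-- `F p` as the ATL* path formula `⊤ U p` over a single atom. -/
def Fp : PF Unit (Fin 2) :=
  PF.untl (PF.imp (PF.of (SF.atom ())) (PF.of (SF.atom ()))) (PF.of (SF.atom ()))

namespace CE

inductive S7 : Type | a | b | q0 | q3 | top | bot
  deriving DecidableEq

instance : Fintype S7 :=
  ⟨⟨↑[S7.a, S7.b, S7.q0, S7.q3, S7.top, S7.bot], Multiset.coe_nodup.mpr (by decide)⟩,
    fun x => by cases x <;> decide⟩

inductive S8 : Type | pa | pb | u0 | u1 | v0 | v1 | top | bot
  deriving DecidableEq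

instance : Fintype S8 :=
  ⟨⟨↑[S8.pa, S8.pb, S8.u0, S8.u1, S8.v0, S8.v1, S8.top, S8.bot],
    Multiset.coe_nodup.mpr (by decide)⟩, fun x => by cases x <;> decide⟩

def cl7 (i : Fin 2) (s : S7) : S7 :=
  if i = 0 then s else
    match s with
    | .a => .a | .b => .a
    | .q0 => .q0 | .q3 => .q0
    | .top => .top | .bot => .bot

def cl8 (i : Fin 2) (s : S8) : S8 :=
  if i = 0 then s else
    match s with
    | .pa => .pa | .pb => .pa
    | .u0 => .u0 | .u1 => .u0
    | .v0 => .v0 | .v1 => .v0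
    | .top => .top | .bot => .bot

def d7 (s : S7) (x : Bool) : S7 :=
  match s with
  | .a => .q0 | .b => .q3
  | .q0 => if x then .top else .bot
  | .q3 => if x then .bot else .top
  | .top => .top | .bot => .bot

def d8 (s : S8) (x : Bool) : S8 :=
  match s with
  | .pa => .u0 | .pb => .v1
  | .u0 => if x then .top else .bot
  | .u1 => if x then .bot else .top
  | .v0 => if x then .top else .bot
  | .v1 => if x then .bot else .top
  | .top => .top | .bot => .bot

def G7 : iCGS (Fin 2) Unit S7 Bool where
  init := .a
  indist := fun i s t => cl7 i s = cl7 i t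
  protocol := fun _ _ => Set.univ
  trans := fun s acts t => t = d7 s (acts 1)
  label := fun s => {_u : Unit | s = S7.top}

def G8 : iCGS (Fin 2) Unit S8 Bool where
  init := .pa
  indist := fun i s t => cl8 i s = cl8 i t
  protocol := fun _ _ => Set.univ
  trans := fun s acts t => t = d8 s (acts 1)
  label := fun s => {_u : Unit | s = S8.top}

def h : S8 → S7
  | .pa => .a | .pb => .b
  | .u0 => .q0 | .u1 => .q3
  | .v0 => .q0 | .v1 => .q3
  | .top => .top | .bot => .bot

def R : S7 → S8 → Prop := fun q q' => h q' = q

def gU : S7 → S8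
  | .a => .pa | .b => .pb
  | .q0 => .u0 | .q3 => .u1
  | .top => .top | .bot => .bot

def gV : S7 → S8
  | .a => .pa | .b => .pb
  | .q0 => .v0 | .q3 => .v1
  | .top => .top | .bot => .bot

def gg (q : S8) : S7 → S8 := if cl8 1 q = S8.v0 then gV else gU

noncomputable def g (E : Set S8) : S7 → S8 :=
  @ite _ (S8.v0 ∈ E) (Classical.propDecidable _) gV gU

lemma mem7 {q r : S7} : r ∈ G7.EKN Set.univ q ↔ ∃ i, cl7 i q = cl7 i r := by
  simp only [iCGS.EKN, Set.mem_setOf_eq, Set.mem_univ, true_and]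
  exact Iff.rfl

lemma mem8 {q r : S8} : r ∈ G8.EKN Set.univ q ↔ ∃ i, cl8 i q = cl8 i r := by
  simp only [iCGS.EKN, Set.mem_setOf_eq, Set.mem_univ, true_and]
  exact Iff.rfl

-- key finite facts
lemma L1 : ∀ (i : Fin 2) (s t : S8), cl8 i s = cl8 i t → cl7 i (h s) = cl7 i (h t) := by decide
lemma L2 : ∀ (s : S8) (x : Bool), h (d8 s x) = d7 (h s) x := by decide
lemma L3 : ∀ (q r : S8), (∃ i, cl8 i q = cl8 i r) → gg q (h r) = r := by decide
lemma L4 : ∀ (q : S8) (s : S7), (∃ i, cl7 i (h q) = cl7 i s) →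
    ∃ i, cl8 i q = cl8 i (gg q s) := by decide
lemma L5 : ∀ (q : S8) (i : Fin 2) (s t : S7), cl7 i s = cl7 i t →
    cl8 i (gg q s) = cl8 i (gg q t) := by decide
lemma L6 : ∀ (q : S8) (r : S7), (∃ i, cl7 i (h q) = cl7 i r) → h (gg q r) = r := by decide
lemma L8 : ∀ (q : S8) (i : Fin 2) (r : S7), cl7 i (h q) = cl7 i r →
    cl8 i q = cl8 i (gg q r) := by decide
lemma Lv0 : ∀ q : S8, (∃ i, cl8 i q = cl8 i S8.v0) ↔ cl8 1 q = S8.v0 := by decide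
lemma Llab : ∀ q : S8, (h q = S7.top) ↔ (q = S8.top) := by decide

lemma geval (q : S8) : g (G8.EKN Set.univ q) = gg q := by
  unfold g gg
  by_cases hq : cl8 1 q = S8.v0
  · rw [if_pos (mem8.mpr ((Lv0 q).mpr hq)), if_pos hq]
  · rw [if_neg (fun hm => hq ((Lv0 q).mp (mem8.mp hm))), if_neg hq]

lemma K1 {q' s : S8} (hs : s ∈ G8.EKN Set.univ q') :
    h s ∈ G7.EKN Set.univ (h q') := by
  obtain ⟨i, hi⟩ := mem8.mp hs
  exact mem7.mpr ⟨i, L1 i q' s hi⟩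

lemma lab_eq (q : S8) : G7.label (h q) = G8.label q := by
  apply Set.ext; intro u
  simp only [G7, G8, Set.mem_setOf_eq]
  exact Llab q

theorem fwd : G7.IsPreSimulation G8 Set.univ R := by
  refine ⟨⟨fun _ _ σ i s' => σ i (h s'), ?_⟩, ?_, ?_⟩
  · intro q q' hR
    subst hR
    constructor
    · intro σ hσ
      refine ⟨fun _ _ _ _ => trivial, ?_⟩
      intro i _ s hs t ht hst
      exact hσ.2 i trivial (h s) (K1 hs) (h t) (K1 ht) (L1 i s t hst)
    · intro r hr r' hr' hRr σ hσ s' hs'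
      obtain ⟨aa, haa, hts⟩ := hs'
      subst hRr
      refine ⟨d7 (h r') (aa 1), ⟨aa, haa, rfl⟩, ?_⟩
      show h s' = d7 (h r') (aa 1)
      rw [hts]
      exact L2 r' (aa 1)
  · intro q q' hR
    subst hR
    exact lab_eq q'
  · intro q q' hR i _ r' hir'
    subst hR
    exact ⟨h r', L1 i q' r' hir', rfl⟩

noncomputable def STb : Set S8 → Set S7 → (Fin 2 → S8 → Bool) → (Fin 2 → S7 → Bool) :=
  fun E _ τ i s => τ i (g E s)

theorem bwd : G8.IsPreSimulation G7 Set.univ (fun q' q => R q q') := by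
  refine ⟨⟨STb, ?_⟩, ?_, ?_⟩
  · intro q q' hR
    subst hR
    constructor
    · intro τ hτ
      refine ⟨fun _ _ _ _ => trivial, ?_⟩
      intro i _ s hs t ht hst
      simp only [STb]
      rw [geval]
      exact hτ.2 i trivial (gg q s) (mem8.mpr (L4 q s (mem7.mp hs)))
        (gg q t) (mem8.mpr (L4 q t (mem7.mp ht))) (L5 q i s t hst)
    · intro r hr r' hr' hRr τ hτ s hs
      obtain ⟨aa, haa, hts⟩ := hs
      simp only [STb] at haa
      have hRr' : h r = r' := hRr
      refine ⟨d8 r (τ 1 r), ⟨fun i => τ i r, fun i _ => rfl, rfl⟩, ?_⟩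
      show h (d8 r (τ 1 r)) = s
      have h1 : gg q (h r) = r := L3 q r (mem8.mp hr)
      have h2 : aa 1 = τ 1 r := by
        rw [haa 1 trivial, geval, ← hRr', h1]
      have hts' : s = d7 r' (aa 1) := hts
      rw [hts', ← hRr', ← h2]
      exact L2 r (aa 1)
  · intro q q' hR
    subst hR
    exact (lab_eq q).symm
  · intro q q' hR i _ r' hir'
    subst hR
    exact ⟨gg q r', L8 q i r' hir', L6 q r' ⟨i, hir'⟩⟩


theorem valid7 : G7.Valid := by
  refine ⟨fun i => ⟨fun _ => rfl, Eq.symm, Eq.trans⟩, fun i s => ⟨true, trivial⟩,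
    fun i s s' _ => rfl, fun s a => ⟨fun _ i => trivial, fun _ => ⟨d7 s (a 1), rfl⟩⟩⟩

theorem valid8 : G8.Valid := by
  refine ⟨fun i => ⟨fun _ => rfl, Eq.symm, Eq.trans⟩, fun i s => ⟨true, trivial⟩,
    fun i s s' _ => rfl, fun s a => ⟨fun _ i => trivial, fun _ => ⟨d8 s (a 1), rfl⟩⟩⟩

/-- the run in `G7` starting at `x`, then `y`, then staying in `bot`. -/
def run7 (x y : S7) : ℕ → S7
  | 0 => x
  | 1 => y
  | _ + 2 => S7.bot

lemma run7_mem (σ : Fin 2 → S7 → Bool) (x : S7)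
    (hb : d7 (d7 x (σ 1 x)) (σ 1 (d7 x (σ 1 x))) = S7.bot) :
    run7 x (d7 x (σ 1 x)) ∈ G7.OutObj Set.univ σ x := by
  refine ⟨rfl, fun j => ⟨fun i => σ i (run7 x (d7 x (σ 1 x)) j), fun i _ => rfl, ?_⟩⟩
  match j with
  | 0 => rfl
  | 1 => exact hb.symm
  | (j + 2) => rfl

lemma run7_not (x y : S7) (hx : x ≠ S7.top) (hy : y ≠ S7.top) :
    ∀ j, run7 x y j ≠ S7.top := by
  intro j
  match j with
  | 0 => exact hx
  | 1 => exact hy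
  | (j + 2) => exact fun hc => S7.noConfusion hc

theorem neg7 : SSat G7 true S7.a (SF.neg (SF.coal Set.univ Fp)) := by
  simp only [SSat]
  rintro ⟨σ, hσ, hall⟩
  have hc : σ 1 S7.q0 = σ 1 S7.q3 :=
    hσ.2 1 trivial S7.q0 trivial S7.q3 trivial rfl
  -- pick the starting state according to the value of σ 1 q0
  obtain ⟨x, hx, hrun⟩ : ∃ x, G7.indist 1 S7.a x ∧
      run7 x (d7 x (σ 1 x)) ∈ G7.OutObj Set.univ σ x ∧
      (∀ j, run7 x (d7 x (σ 1 x)) j ≠ S7.top) := by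
    cases hb : σ 1 S7.q0 with
    | true =>
        refine ⟨S7.b, rfl, ?_, ?_⟩
        · apply run7_mem
          show d7 S7.q3 (σ 1 S7.q3) = S7.bot
          rw [← hc, hb]; rfl
        · apply run7_not
          · exact fun hc => S7.noConfusion hc
          · exact fun hc => S7.noConfusion hc
    | false =>
        refine ⟨S7.a, rfl, ?_, ?_⟩
        · apply run7_mem
          show d7 S7.q0 (σ 1 S7.q0) = S7.bot
          rw [hb]; rfl
        · apply run7_not
          · exact fun hc => S7.noConfusion hc
          · exact fun hc => S7.noConfusion hc
  obtain ⟨hmem, hnot⟩ := hrun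
  have hout : run7 x (d7 x (σ 1 x)) ∈ G7.Out true Set.univ σ S7.a := by
    simp only [iCGS.Out, if_true]
    exact Or.inr ⟨1, trivial, x, hx, hmem⟩
  have hP := hall _ hout
  obtain ⟨j, hj, -⟩ := hP
  exact hnot (0 + j) hj

def sig8 : Fin 2 → S8 → Bool := fun _ s =>
  match s with
  | .v0 => false | .v1 => false
  | _ => true

lemma sig8_unif : ∀ (i : Fin 2) (s t : S8), cl8 i s = cl8 i t → sig8 i s = sig8 i t := by
  decide

lemma start8 : ∀ (i : Fin 2) (r : S8), cl8 i S8.pa = cl8 i r → r = S8.pa ∨ r = S8.pb := by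
  decide

theorem pos8 : SSat G8 true S8.pa (SF.coal Set.univ Fp) := by
  refine ⟨sig8, ⟨fun _ _ _ _ => trivial, fun i _ s _ t _ hst => sig8_unif i s t hst⟩, ?_⟩
  intro lam hlam
  have key : lam 2 = S8.top := by
    simp only [iCGS.Out, if_true] at hlam
    obtain ⟨r, hr, h0, hstep⟩ : ∃ r, (r = S8.pa ∨ r = S8.pb) ∧ lam 0 = r ∧
        ∀ j, lam (j + 1) ∈ G8.succ Set.univ sig8 (lam j) := by
      rcases hlam with ⟨h0, hstep⟩ | ⟨i, -, r, hir, h0, hstep⟩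
      · exact ⟨S8.pa, Or.inl rfl, h0, hstep⟩
      · exact ⟨r, start8 i r hir, h0, hstep⟩
    have e1 : lam 1 = d8 (lam 0) (sig8 1 (lam 0)) := by
      obtain ⟨aa, ha, ht⟩ := hstep 0
      have ht' : lam 1 = d8 (lam 0) (aa 1) := ht
      rw [ht', ha 1 trivial]
    have e2 : lam 2 = d8 (lam 1) (sig8 1 (lam 1)) := by
      obtain ⟨aa, ha, ht⟩ := hstep 1
      have ht' : lam 2 = d8 (lam 1) (aa 1) := ht
      rw [ht', ha 1 trivial]
    rcases hr with h | h <;> rw [e2, e1, h0, h] <;> rfl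
  refine ⟨2, key, fun k _ => id⟩

end CE


/-- pre-bisimilarity does not imply ATL*-equivalence: there are
finite two-agent iCGS, pre-bisimilar states `q ⪅ q'`, with
`(G₇,q) ⊨_subj ¬⟨⟨Ag⟩⟩F p` but `(G₈,q') ⊨_subj ⟨⟨Ag⟩⟩F p`. -/
theorem prebisimulation_does_not_preserve :
    ∃ (S₇ S₈ Act₇ Act₈ : Type) (_ : Fintype S₇) (_ : Fintype S₈)
      (_ : Fintype Act₇) (_ : Fintype Act₈)
      (G₇ : iCGS (Fin 2) Unit S₇ Act₇) (G₈ : iCGS (Fin 2) Unit S₈ Act₈)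
      (q : S₇) (q' : S₈) (R : S₇ → S₈ → Prop),
      G₇.Valid ∧ G₈.Valid ∧
      G₇.IsPreBisimulation G₈ Set.univ R ∧ R q q' ∧
      SSat G₇ true q (SF.neg (SF.coal Set.univ Fp)) ∧
      SSat G₈ true q' (SF.coal Set.univ Fp) :=
  ⟨CE.S7, CE.S8, Bool, Bool, inferInstance, inferInstance, inferInstance, inferInstance,
    CE.G7, CE.G8, CE.S7.a, CE.S8.pa, CE.R,
    CE.valid7, CE.valid8, ⟨CE.fwd, CE.bwd⟩, rfl, CE.neg7, CE.pos8⟩
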